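/- Let $G$ be a locally compact abelian group with Haar measure, and let $\Phi_1,\ldots,\Phi_n \in L^1(G)$. Suppose that for every choice of signs $\varepsilon \in \{-1,1\}^n$ we have $\|\sum_{j=1}^n \varepsilon_j \Phi_j\|_{L^1} \le M$. Then $\int_G \frac{1}{\sqrt{2}}\big(\sum_{j=1}^n |\Phi_j(x)|^2\big)^{1/2}\,dx \le M$. -/

import Mathlib

open Finset

namespace Stmt0Cube

variable {n : ℕ}

/-- sign of a boolean -/
def s (b : Bool) : ℝ := if b then 1 else -1

lemma s_not (b : Bool) : s (!b) = - s b := by cases b <;> simp [s]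

lemma s_mul_self (b : Bool) : s b * s b = 1 := by cases b <;> simp [s]

/-- Walsh function -/
def w (A : Finset (Fin n)) (ε : Fin n → Bool) : ℝ := ∏ i ∈ A, s (ε i)

lemma sum_w (C : Finset (Fin n)) :
    ∑ ε : Fin n → Bool, w C ε = if C = ∅ then (2:ℝ)^n else 0 := by
  have h1 : ∀ ε : Fin n → Bool, w C ε
      = ∏ i : Fin n, (if i ∈ C then s (ε i) else 1) := by
    intro ε; rw [Fintype.prod_ite_mem]; rfl
  simp only [h1]
  have h2 : ∑ ε : Fin n → Bool, ∏ i : Fin n, (if i ∈ C then s (ε i) else 1)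
      = ∏ i : Fin n, ∑ b : Bool, (if i ∈ C then s b else 1) := by
    rw [← Finset.sum_prod_piFinset Finset.univ (fun i b => if i ∈ C then s b else 1),
      Fintype.piFinset_univ]
  rw [h2]
  have h3 : ∀ i : Fin n, (∑ b : Bool, (if i ∈ C then s b else 1))
      = if i ∈ C then 0 else 2 := by
    intro i; by_cases h : i ∈ C <;> simp [h, s]
  simp only [h3]
  by_cases hC : C = ∅
  · simp [hC]
  · rw [if_neg hC]
    obtain ⟨i, hi⟩ := Finset.nonempty_iff_ne_empty.2 hC
    exact Finset.prod_eq_zero (Finset.mem_univ i) (by simp [hi])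

lemma sum_w_mul_w (ε ε' : Fin n → Bool) :
    ∑ A : Finset (Fin n), w A ε * w A ε' = if ε = ε' then (2:ℝ)^n else 0 := by
  have h1 : ∀ A : Finset (Fin n), w A ε * w A ε'
      = (∏ i ∈ A, s (ε i) * s (ε' i)) * ∏ i ∈ Aᶜ, (1:ℝ) := by
    intro A; rw [Finset.prod_mul_distrib, Finset.prod_const_one, mul_one]; rfl
  simp only [h1]
  rw [← Fintype.prod_add]
  by_cases h : ε = ε'
  · subst h
    simp only [s_mul_self]
    norm_num
  · obtain ⟨i, hi⟩ : ∃ i, ε i ≠ ε' i := by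
      by_contra hc; push_neg at hc; exact h (funext hc)
    rw [if_neg h]
    apply Finset.prod_eq_zero (Finset.mem_univ i)
    have : s (ε i) * s (ε' i) = -1 := by
      cases hb : ε i <;> cases hb' : ε' i <;> simp_all [s]
    rw [this]; ring

lemma parseval (f : (Fin n → Bool) → ℝ) :
    ∑ A : Finset (Fin n), (∑ ε : Fin n → Bool, f ε * w A ε)^2
      = 2^n * ∑ ε : Fin n → Bool, (f ε)^2 := by
  have h1 : ∀ A : Finset (Fin n), (∑ ε : Fin n → Bool, f ε * w A ε)^2
      = ∑ ε : Fin n → Bool, ∑ ε' : Fin n → Bool, (f ε * f ε') * (w A ε * w A ε') := by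
    intro A
    rw [sq, Finset.sum_mul_sum]
    apply Finset.sum_congr rfl; intro ε _
    apply Finset.sum_congr rfl; intro ε' _
    ring
  simp only [h1]
  rw [Finset.sum_comm]
  have h2 : ∀ ε : Fin n → Bool,
      ∑ A : Finset (Fin n), ∑ ε' : Fin n → Bool, (f ε * f ε') * (w A ε * w A ε')
      = (f ε * f ε) * 2^n := by
    intro ε
    rw [Finset.sum_comm]
    have h3 : ∀ ε' : Fin n → Bool,
        ∑ A : Finset (Fin n), (f ε * f ε') * (w A ε * w A ε')
        = if ε = ε' then f ε * f ε' * 2^n else 0 := by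
      intro ε'
      rw [← Finset.mul_sum, sum_w_mul_w]
      split <;> simp [mul_comm]
    simp only [h3]
    rw [Finset.sum_ite_eq]
    simp
  simp only [h2]
  rw [Finset.mul_sum]
  apply Finset.sum_congr rfl; intro ε _; ring


lemma w_not (A : Finset (Fin n)) (ε : Fin n → Bool) :
    w A (fun i => !(ε i)) = (-1)^A.card * w A ε := by
  unfold w
  have h1 : ∀ j ∈ A, s (!(ε j)) = (-1) * s (ε j) := by
    intro j _; rw [s_not]; ring
  rw [Finset.prod_congr rfl h1, Finset.prod_mul_distrib, Finset.prod_const]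

/-- flip one coordinate -/
def fl (i : Fin n) (ε : Fin n → Bool) : Fin n → Bool := Function.update ε i (!(ε i))

lemma fl_apply (i : Fin n) (ε : Fin n → Bool) (j : Fin n) :
    fl i ε j = if j = i then !(ε i) else ε j := by
  simp [fl, Function.update_apply]

lemma fl_invol (i : Fin n) : Function.Involutive (fl i) := by
  intro ε; funext j
  by_cases h : j = i
  · subst h; simp [fl_apply]
  · simp [fl_apply, h]

lemma w_fl (A : Finset (Fin n)) (i : Fin n) (ε : Fin n → Bool) :
    w A (fl i ε) = (if i ∈ A then -1 else 1) * w A ε := by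
  by_cases h : i ∈ A
  · rw [if_pos h]
    unfold w
    rw [← Finset.mul_prod_erase A (fun j => s (fl i ε j)) h,
      ← Finset.mul_prod_erase A (fun j => s (ε j)) h]
    have h1 : ∀ j ∈ A.erase i, s (fl i ε j) = s (ε j) := by
      intro j hj
      rw [fl_apply, if_neg (Finset.ne_of_mem_erase hj)]
    rw [Finset.prod_congr rfl h1]
    have h2 : s (fl i ε i) = - s (ε i) := by rw [fl_apply, if_pos rfl, s_not]
    rw [h2]; ring
  · rw [if_neg h, one_mul]
    unfold w
    apply Finset.prod_congr rfl
    intro j hj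
    rw [fl_apply, if_neg (fun hji => h (by rw [← hji]; exact hj))]

lemma sum_s_mul_s (j k : Fin n) :
    ∑ ε : Fin n → Bool, s (ε j) * s (ε k) = if j = k then (2:ℝ)^n else 0 := by
  by_cases h : j = k
  · subst h
    simp only [s_mul_self, if_pos rfl]
    rw [Finset.sum_const, Finset.card_univ]
    simp [two_mul]
  · rw [if_neg h]
    have h1 : ∀ ε : Fin n → Bool, s (ε j) * s (ε k) = w {j, k} ε := by
      intro ε; rw [w, Finset.prod_pair h]
    simp only [h1]
    rw [sum_w]
    simp [Finset.insert_ne_empty]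

lemma sum_sq_lin (u : Fin n → ℝ) :
    ∑ ε : Fin n → Bool, (∑ j, s (ε j) * u j)^2 = 2^n * ∑ j, (u j)^2 := by
  have h1 : ∀ ε : Fin n → Bool, (∑ j, s (ε j) * u j)^2
      = ∑ j, ∑ k, (u j * u k) * (s (ε j) * s (ε k)) := by
    intro ε
    rw [sq, Finset.sum_mul_sum]
    apply Finset.sum_congr rfl; intro j _
    apply Finset.sum_congr rfl; intro k _
    ring
  simp only [h1]
  rw [Finset.sum_comm]
  have h2 : ∀ j : Fin n, ∑ ε : Fin n → Bool, ∑ k, (u j * u k) * (s (ε j) * s (ε k))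
      = u j * u j * 2^n := by
    intro j
    rw [Finset.sum_comm]
    have h3 : ∀ k, ∑ ε : Fin n → Bool, (u j * u k) * (s (ε j) * s (ε k))
        = if j = k then u j * u k * 2^n else 0 := by
      intro k
      rw [← Finset.mul_sum, sum_s_mul_s]
      split <;> simp [mul_comm]
    simp only [h3]
    rw [Finset.sum_ite_eq]
    simp
  simp only [h2]
  rw [Finset.mul_sum]
  apply Finset.sum_congr rfl; intro j _; ring


lemma card_cube : Fintype.card (Fin n → Bool) = 2^n := by simp

/-- the Rademacher sum norm -/
noncomputable def f (a : Fin n → ℂ) (ε : Fin n → Bool) : ℝ := ‖∑ j, ((s (ε j) : ℝ) : ℂ) * a j‖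

/-- Walsh coefficient (unnormalized) -/
noncomputable def c (a : Fin n → ℂ) (A : Finset (Fin n)) : ℝ := ∑ ε : Fin n → Bool, f a ε * w A ε

lemma norm_sq_complex (z : ℂ) : ‖z‖^2 = z.re^2 + z.im^2 := by
  rw [Complex.sq_norm, Complex.normSq_apply]; ring

lemma moment (a : Fin n → ℂ) :
    ∑ ε : Fin n → Bool, (f a ε)^2 = 2^n * ∑ j, ‖a j‖^2 := by
  have h1 : ∀ ε : Fin n → Bool, (f a ε)^2
      = (∑ j, s (ε j) * (a j).re)^2 + (∑ j, s (ε j) * (a j).im)^2 := by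
    intro ε
    rw [f, norm_sq_complex]
    congr 2
    · rw [Complex.re_sum]
      apply Finset.sum_congr rfl; intro j _
      simp [Complex.mul_re]
    · rw [Complex.im_sum]
      apply Finset.sum_congr rfl; intro j _
      simp [Complex.mul_im]
  simp only [h1]
  rw [Finset.sum_add_distrib, sum_sq_lin, sum_sq_lin, ← mul_add]
  congr 1
  rw [← Finset.sum_add_distrib]
  apply Finset.sum_congr rfl; intro j _
  rw [norm_sq_complex]

lemma c_empty (a : Fin n → ℂ) : c a ∅ = ∑ ε : Fin n → Bool, f a ε := by
  simp [c, w]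

lemma f_even (a : Fin n → ℂ) (ε : Fin n → Bool) : f a (fun i => !(ε i)) = f a ε := by
  have h : ∑ j, ((s (!(ε j)) : ℝ) : ℂ) * a j = - ∑ j, ((s (ε j) : ℝ) : ℂ) * a j := by
    rw [← Finset.sum_neg_distrib]
    apply Finset.sum_congr rfl; intro j _
    rw [s_not]; push_cast; ring
  rw [f, f, h, norm_neg]

lemma c_odd (a : Fin n → ℂ) (A : Finset (Fin n)) (hA : ¬ Even A.card) : c a A = 0 := by
  have hbij : Function.Bijective (fun ε : Fin n → Bool => fun i => !(ε i)) :=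
    Function.Involutive.bijective (fun ε => by funext i; simp)
  have h1 : c a A
      = ∑ ε : Fin n → Bool, f a (fun i => !(ε i)) * w A (fun i => !(ε i)) :=
    (Fintype.sum_bijective _ hbij _ _ (fun x => rfl)).symm
  have h2 : ∀ ε : Fin n → Bool, f a (fun i => !(ε i)) * w A (fun i => !(ε i))
      = - (f a ε * w A ε) := by
    intro ε
    rw [f_even, w_not, Odd.neg_one_pow (Nat.not_even_iff_odd.1 hA)]
    ring
  have h3 : c a A = - c a A := by
    nth_rewrite 1 [h1]
    simp only [h2]
    rw [Finset.sum_neg_distrib]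
    rfl
  linarith

lemma c_fl (a : Fin n → ℂ) (i : Fin n) (A : Finset (Fin n)) :
    ∑ ε : Fin n → Bool, f a (fl i ε) * w A ε = (if i ∈ A then -1 else 1) * c a A := by
  have hbij := (fl_invol i).bijective
  have h1 : ∑ ε : Fin n → Bool, f a ε * w A (fl i ε)
      = ∑ ε : Fin n → Bool, f a (fl i ε) * w A ε := by
    apply Fintype.sum_bijective (fl i) hbij
    intro ε
    show f a ε * w A (fl i ε) = f a (fl i (fl i ε)) * w A (fl i ε)
    rw [fl_invol i ε]
  rw [← h1]
  have h2 : ∀ ε : Fin n → Bool, f a ε * w A (fl i ε)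
      = (if i ∈ A then (-1:ℝ) else 1) * (f a ε * w A ε) := by
    intro ε; rw [w_fl]; ring
  simp only [h2]
  rw [← Finset.mul_sum]
  rfl

lemma dir (a : Fin n → ℂ) (i : Fin n) :
    ∑ A : Finset (Fin n), (if i ∈ A then (2:ℝ) * c a A else 0)^2
      = 2^n * ∑ ε : Fin n → Bool, (f a ε - f a (fl i ε))^2 := by
  rw [← parseval (fun ε => f a ε - f a (fl i ε))]
  apply Finset.sum_congr rfl; intro A _
  congr 1
  simp only [sub_mul]
  rw [Finset.sum_sub_distrib, c_fl a i A]
  show _ = c a A - _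
  by_cases h : i ∈ A
  · rw [if_pos h, if_pos h]; ring
  · rw [if_neg h, if_neg h]; ring

lemma lip (a : Fin n → ℂ) (i : Fin n) (ε : Fin n → Bool) :
    (f a ε - f a (fl i ε))^2 ≤ 4 * ‖a i‖^2 := by
  have h1 : |f a ε - f a (fl i ε)| ≤ 2 * ‖a i‖ := by
    refine le_trans (abs_norm_sub_norm_le _ _) ?_
    rw [← Finset.sum_sub_distrib]
    have h2 : ∑ j, (((s (ε j) : ℝ) : ℂ) * a j - ((s (fl i ε j) : ℝ) : ℂ) * a j)
        = (((s (ε i) - s (!(ε i)) : ℝ)) : ℂ) * a i := by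
      rw [Finset.sum_eq_single i]
      · rw [fl_apply, if_pos rfl]; push_cast; ring
      · intro j _ hj; rw [fl_apply, if_neg hj, sub_self]
      · intro h; exact absurd (Finset.mem_univ i) h
    rw [h2, norm_mul, Complex.norm_real, Real.norm_eq_abs]
    have h3 : |s (ε i) - s (!(ε i))| = 2 := by cases h : ε i <;> norm_num [s]
    rw [h3]
  calc (f a ε - f a (fl i ε))^2 = |f a ε - f a (fl i ε)|^2 := (sq_abs _).symm
    _ ≤ (2 * ‖a i‖)^2 := pow_le_pow_left₀ (abs_nonneg _) h1 2
    _ = 4 * ‖a i‖^2 := by ring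


lemma h4n : (4:ℝ)^n = 2^n * 2^n := by rw [← mul_pow]; norm_num

lemma khinchin (a : Fin n → ℂ) :
    (1 / Real.sqrt 2) * Real.sqrt (∑ j, ‖a j‖ ^ 2)
      ≤ ((2:ℝ)^n)⁻¹ * ∑ ε : Fin n → Bool, f a ε := by
  classical
  set t : ℝ := ∑ j, ‖a j‖ ^ 2 with htdef
  set T : ℝ := ∑ ε : Fin n → Bool, f a ε with hTdef
  have ht0 : 0 ≤ t := Finset.sum_nonneg (fun j _ => sq_nonneg _)
  have hT0 : 0 ≤ T := Finset.sum_nonneg (fun ε _ => norm_nonneg _)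
  -- weighted coefficient mass bound
  have hmass : ∑ A : Finset (Fin n), (A.card : ℝ) * (c a A)^2 ≤ (4:ℝ)^n * t := by
    have h1 : ∀ i : Fin n,
        ∑ A : Finset (Fin n), (if i ∈ A then (2:ℝ) * c a A else 0)^2
          ≤ (4 * (4:ℝ)^n) * ‖a i‖^2 := by
      intro i
      rw [dir a i]
      calc (2:ℝ)^n * ∑ ε : Fin n → Bool, (f a ε - f a (fl i ε))^2
          ≤ (2:ℝ)^n * ∑ ε : Fin n → Bool, 4 * ‖a i‖^2 := by
            apply mul_le_mul_of_nonneg_left _ (by positivity)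
            exact Finset.sum_le_sum (fun ε _ => lip a i ε)
        _ = (4 * (4:ℝ)^n) * ‖a i‖^2 := by
            rw [Finset.sum_const, Finset.card_univ, card_cube, nsmul_eq_mul, h4n]
            push_cast
            ring
    have h2 : ∑ i : Fin n, ∑ A : Finset (Fin n), (if i ∈ A then (2:ℝ) * c a A else 0)^2
        = 4 * ∑ A : Finset (Fin n), (A.card : ℝ) * (c a A)^2 := by
      rw [Finset.sum_comm, Finset.mul_sum]
      apply Finset.sum_congr rfl; intro A _
      have h3 : ∀ i : Fin n, (if i ∈ A then (2:ℝ) * c a A else 0)^2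
          = if i ∈ A then 4 * (c a A)^2 else 0 := by
        intro i
        by_cases h : i ∈ A
        · rw [if_pos h, if_pos h]; ring
        · rw [if_neg h, if_neg h]; ring
      simp only [h3]
      rw [Finset.sum_ite_mem, Finset.univ_inter, Finset.sum_const, nsmul_eq_mul]
      ring
    have h4 : ∑ i : Fin n, (4 * (4:ℝ)^n) * ‖a i‖^2 = 4 * ((4:ℝ)^n * t) := by
      rw [← Finset.mul_sum, htdef]; ring
    have h5 := Finset.sum_le_sum (fun i (_ : i ∈ Finset.univ) => h1 i)
    rw [h2, h4] at h5
    linarith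
  -- variance bound
  have hvar : ∑ A ∈ (Finset.univ : Finset (Finset (Fin n))).erase ∅, (c a A)^2
      ≤ (1/2) * ∑ A : Finset (Fin n), (A.card : ℝ) * (c a A)^2 := by
    have h1 : ∀ A ∈ (Finset.univ : Finset (Finset (Fin n))).erase ∅,
        (c a A)^2 ≤ (1/2) * ((A.card : ℝ) * (c a A)^2) := by
      intro A hA
      have hne : A ≠ ∅ := Finset.ne_of_mem_erase hA
      by_cases h : Even A.card
      · have hcard : 2 ≤ A.card := by
          have h0 : A.card ≠ 0 := by simpa [Finset.card_eq_zero] using hne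
          rcases h with ⟨k, hk⟩
          omega
        have hc : (2:ℝ) ≤ (A.card : ℝ) := by exact_mod_cast hcard
        nlinarith [sq_nonneg (c a A)]
      · rw [c_odd a A h]
        norm_num
    calc ∑ A ∈ (Finset.univ : Finset (Finset (Fin n))).erase ∅, (c a A)^2
        ≤ ∑ A ∈ (Finset.univ : Finset (Finset (Fin n))).erase ∅,
            (1/2) * ((A.card : ℝ) * (c a A)^2) := Finset.sum_le_sum h1
      _ = (1/2) * ∑ A ∈ (Finset.univ : Finset (Finset (Fin n))).erase ∅,
            (A.card : ℝ) * (c a A)^2 := by rw [Finset.mul_sum]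
      _ ≤ (1/2) * ∑ A : Finset (Fin n), (A.card : ℝ) * (c a A)^2 := by
          apply mul_le_mul_of_nonneg_left _ (by norm_num)
          apply Finset.sum_le_sum_of_subset_of_nonneg (Finset.erase_subset _ _)
          intro A _ _
          positivity
  -- Parseval and combination
  have hsplit : (c a ∅)^2 + ∑ A ∈ (Finset.univ : Finset (Finset (Fin n))).erase ∅, (c a A)^2
      = ∑ A : Finset (Fin n), (c a A)^2 :=
    Finset.add_sum_erase Finset.univ (fun A => (c a A)^2) (Finset.mem_univ ∅)
  have hparse : ∑ A : Finset (Fin n), (c a A)^2 = (4:ℝ)^n * t := by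
    unfold c
    rw [parseval (f a), moment a, ← htdef, h4n]; ring
  have hce : c a ∅ = T := c_empty a
  have hT2 : (1/2) * ((4:ℝ)^n * t) ≤ T^2 := by
    rw [hparse] at hsplit
    rw [hce] at hsplit
    linarith
  -- conclude
  have h2n0 : (0:ℝ) < 2^n := by positivity
  have h4n0 : (0:ℝ) < 4^n := by positivity
  have lhs_eq : (1 / Real.sqrt 2) * Real.sqrt t = Real.sqrt (t/2) := by
    rw [Real.sqrt_div ht0]
    ring
  rw [lhs_eq]
  have hsq : t/2 ≤ (((2:ℝ)^n)⁻¹ * T)^2 := by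
    have he : (((2:ℝ)^n)⁻¹ * T)^2 = ((4:ℝ)^n)⁻¹ * T^2 := by
      rw [mul_pow, inv_pow, sq ((2:ℝ)^n), ← h4n]
    rw [he]
    calc t/2 = ((4:ℝ)^n)⁻¹ * ((1/2) * ((4:ℝ)^n * t)) := by field_simp
      _ ≤ ((4:ℝ)^n)⁻¹ * T^2 := mul_le_mul_of_nonneg_left hT2 (by positivity)
  calc Real.sqrt (t/2) ≤ Real.sqrt ((((2:ℝ)^n)⁻¹ * T)^2) := Real.sqrt_le_sqrt hsq
    _ = ((2:ℝ)^n)⁻¹ * T := Real.sqrt_sq (by positivity)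

end Stmt0Cube

open MeasureTheory

theorem stmt0 {G : Type*} [AddCommGroup G] [TopologicalSpace G] [IsTopologicalAddGroup G]
    [LocallyCompactSpace G] [MeasurableSpace G] [BorelSpace G]
    (μ : Measure G) [μ.IsAddHaarMeasure]
    (n : ℕ) (Φ : Fin n → G → ℂ) (hΦ : ∀ j, Integrable (Φ j) μ) (M : ℝ)
    (hM : ∀ ε : Fin n → ℝ, (∀ j, ε j = 1 ∨ ε j = -1) →
      ∫ x, ‖∑ j, (ε j : ℂ) * Φ j x‖ ∂μ ≤ M) :
    ∫ x, (1 / Real.sqrt 2) * Real.sqrt (∑ j, ‖Φ j x‖ ^ 2) ∂μ ≤ M := by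
  classical
  have hFi : ∀ ε : Fin n → Bool,
      Integrable (fun x => ∑ j, ((Stmt0Cube.s (ε j) : ℝ) : ℂ) * Φ j x) μ :=
    fun ε => integrable_finset_sum _ (fun j _ => (hΦ j).const_mul _)
  have hnorm : ∀ ε : Fin n → Bool,
      ∫ x, ‖∑ j, ((Stmt0Cube.s (ε j) : ℝ) : ℂ) * Φ j x‖ ∂μ ≤ M := by
    intro ε
    refine hM (fun j => Stmt0Cube.s (ε j)) (fun j => ?_)
    cases h : ε j
    · right; simp [Stmt0Cube.s, h]
    · left; simp [Stmt0Cube.s, h]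
  have hgint : Integrable (fun x => ((2:ℝ)^n)⁻¹ *
      ∑ ε : Fin n → Bool, ‖∑ j, ((Stmt0Cube.s (ε j) : ℝ) : ℂ) * Φ j x‖) μ :=
    (integrable_finset_sum _ (fun ε _ => (hFi ε).norm)).const_mul _
  have hpt : ∀ x, (1 / Real.sqrt 2) * Real.sqrt (∑ j, ‖Φ j x‖ ^ 2)
      ≤ ((2:ℝ)^n)⁻¹ * ∑ ε : Fin n → Bool, ‖∑ j, ((Stmt0Cube.s (ε j) : ℝ) : ℂ) * Φ j x‖ := by
    intro x
    have := Stmt0Cube.khinchin (fun j => Φ j x)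
    simpa [Stmt0Cube.f] using this
  calc ∫ x, (1 / Real.sqrt 2) * Real.sqrt (∑ j, ‖Φ j x‖ ^ 2) ∂μ
      ≤ ∫ x, ((2:ℝ)^n)⁻¹ *
          ∑ ε : Fin n → Bool, ‖∑ j, ((Stmt0Cube.s (ε j) : ℝ) : ℂ) * Φ j x‖ ∂μ := by
        apply integral_mono_of_nonneg
        · filter_upwards with x
          positivity
        · exact hgint
        · filter_upwards with x
          exact hpt x
    _ = ((2:ℝ)^n)⁻¹ * ∑ ε : Fin n → Bool,
          ∫ x, ‖∑ j, ((Stmt0Cube.s (ε j) : ℝ) : ℂ) * Φ j x‖ ∂μ := by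
        rw [integral_const_mul, integral_finset_sum _ (fun ε _ => (hFi ε).norm)]
    _ ≤ ((2:ℝ)^n)⁻¹ * ∑ _ε : Fin n → Bool, M := by
        apply mul_le_mul_of_nonneg_left _ (by positivity)
        exact Finset.sum_le_sum (fun ε _ => hnorm ε)
    _ = M := by
        rw [Finset.sum_const, Finset.card_univ, Stmt0Cube.card_cube, nsmul_eq_mul]
        push_cast
        rw [← mul_assoc, inv_mul_cancel₀ (by positivity), one_mul]
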